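/- Let μ > 0. There exists a four times continuously differentiable function u : [0,1] → ℝ, not identically zero, satisfying u''''(x) = μ² u(x) on [0,1] together with the boundary conditions u(0) = 0, u'(0) = 0, u''(1) = 0 and u'''(1) = u(1), if and only if f(μ) = 0, where f(μ) = μ√μ + μ√μ·cosh(√μ)·cos(√μ) + sin(√μ)·cosh(√μ) − cos(√μ)·sinh(√μ). -/

import Mathlib

open Real Set

/-- iterated derivative within a uniqueDiffOn set of a globally smooth function. -/
lemma itDW_eq {f : ℝ → ℝ} (hf : ContDiff ℝ (⊤:ℕ∞) f) {s : Set ℝ} (hs : UniqueDiffOn ℝ s) :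
    ∀ (n : ℕ) ⦃x : ℝ⦄, x ∈ s → iteratedDerivWithin n f s x = iteratedDeriv n f x := by
  intro n
  induction n generalizing f with
  | zero => intro x hx; simp
  | succ n IH =>
    intro x hx
    rw [iteratedDerivWithin_succ', iteratedDeriv_succ']
    have hEq : Set.EqOn (derivWithin f s) (deriv f) s := fun y hy =>
      ((hf.differentiable (by simp) y).hasDerivAt.hasDerivWithinAt.derivWithin (hs y hy))
    rw [iteratedDerivWithin_congr hEq hx]
    exact IH ((contDiff_infty_iff_deriv.mp hf).2) hx

lemma wronskian_rel {m : ℝ} {u u1 u2 u3 v0 v1 v2 v3 : ℝ → ℝ}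
    (hu0 : ∀ x ∈ Icc (0:ℝ) 1, HasDerivWithinAt u (u1 x) (Icc 0 1) x)
    (hu1 : ∀ x ∈ Icc (0:ℝ) 1, HasDerivWithinAt u1 (u2 x) (Icc 0 1) x)
    (hu2 : ∀ x ∈ Icc (0:ℝ) 1, HasDerivWithinAt u2 (u3 x) (Icc 0 1) x)
    (hu3 : ∀ x ∈ Icc (0:ℝ) 1, HasDerivWithinAt u3 (m * u x) (Icc 0 1) x)
    (hv0 : ∀ x, HasDerivAt v0 (v1 x) x) (hv1 : ∀ x, HasDerivAt v1 (v2 x) x)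
    (hv2 : ∀ x, HasDerivAt v2 (v3 x) x) (hv3 : ∀ x, HasDerivAt v3 (m * v0 x) x) :
    u3 1 * v0 1 - u2 1 * v1 1 + u1 1 * v2 1 - u 1 * v3 1
      = u3 0 * v0 0 - u2 0 * v1 0 + u1 0 * v2 0 - u 0 * v3 0 := by
  set W : ℝ → ℝ := fun x => u3 x * v0 x - u2 x * v1 x + u1 x * v2 x - u x * v3 x with hW
  have key : ∀ x ∈ Icc (0:ℝ) 1, HasDerivWithinAt W 0 (Icc 0 1) x := by
    intro x hx
    have h := ((((hu3 x hx).mul (hv0 x).hasDerivWithinAt).sub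
        ((hu2 x hx).mul (hv1 x).hasDerivWithinAt)).add
        ((hu1 x hx).mul (hv2 x).hasDerivWithinAt)).sub
        ((hu0 x hx).mul (hv3 x).hasDerivWithinAt)
    refine h.congr_deriv ?_
    ring
  have hcont : ContinuousOn W (Icc 0 1) := fun x hx =>
    (key x hx).differentiableWithinAt.continuousWithinAt
  have hright : ∀ x ∈ Ico (0:ℝ) 1, HasDerivWithinAt W 0 (Ici x) x := by
    intro x hx
    refine (key x ⟨hx.1, hx.2.le⟩).mono_of_mem_nhdsWithin ?_
    rw [mem_nhdsWithin]
    exact ⟨Iio 1, isOpen_Iio, hx.2, fun y hy => ⟨le_trans hx.1 hy.2, hy.1.le⟩⟩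
  have := constant_of_has_deriv_right_zero hcont hright 1 (right_mem_Icc.mpr zero_le_one)
  simpa [hW] using this


lemma zero_of_zero_data {m : ℝ} {u u1 u2 u3 : ℝ → ℝ}
    (hu0 : ∀ x ∈ Icc (0:ℝ) 1, HasDerivWithinAt u (u1 x) (Icc 0 1) x)
    (hu1 : ∀ x ∈ Icc (0:ℝ) 1, HasDerivWithinAt u1 (u2 x) (Icc 0 1) x)
    (hu2 : ∀ x ∈ Icc (0:ℝ) 1, HasDerivWithinAt u2 (u3 x) (Icc 0 1) x)
    (hu3 : ∀ x ∈ Icc (0:ℝ) 1, HasDerivWithinAt u3 (m * u x) (Icc 0 1) x)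
    (h0 : u 0 = 0) (h1 : u1 0 = 0) (h2 : u2 0 = 0) (h3 : u3 0 = 0) :
    ∀ x ∈ Icc (0:ℝ) 1, u x = 0 := by
  classical
  -- the linear vector field
  let E := ℝ × ℝ × ℝ × ℝ
  let p1 : E →L[ℝ] ℝ := ContinuousLinearMap.fst ℝ ℝ (ℝ × ℝ × ℝ)
  let r1 : E →L[ℝ] ℝ × ℝ × ℝ := ContinuousLinearMap.snd ℝ ℝ (ℝ × ℝ × ℝ)
  let p2 : E →L[ℝ] ℝ := (ContinuousLinearMap.fst ℝ ℝ (ℝ × ℝ)).comp r1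
  let r2 : E →L[ℝ] ℝ × ℝ := (ContinuousLinearMap.snd ℝ ℝ (ℝ × ℝ)).comp r1
  let p3 : E →L[ℝ] ℝ := (ContinuousLinearMap.fst ℝ ℝ ℝ).comp r2
  let p4 : E →L[ℝ] ℝ := (ContinuousLinearMap.snd ℝ ℝ ℝ).comp r2
  let L : E →L[ℝ] E := p2.prod (p3.prod (p4.prod (m • p1)))
  let v : ℝ → E → E := fun _ y => L y
  have hv : ∀ t, LipschitzWith ‖L‖₊ (v t) := fun _ => L.lipschitz
  let f : ℝ → E := fun t => (u t, u1 t, u2 t, u3 t)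
  have hf' : ∀ t ∈ Ico (0:ℝ) 1, HasDerivWithinAt f (v t (f t)) (Ici t) t := by
    intro t ht
    have htI : t ∈ Icc (0:ℝ) 1 := ⟨ht.1, ht.2.le⟩
    have hmem : Icc (0:ℝ) 1 ∈ nhdsWithin t (Ici t) := by
      rw [mem_nhdsWithin]
      exact ⟨Iio 1, isOpen_Iio, ht.2, fun y hy => ⟨le_trans ht.1 hy.2, hy.1.le⟩⟩
    have h : HasDerivWithinAt f (u1 t, u2 t, u3 t, m * u t) (Icc 0 1) t :=
      (hu0 t htI).prodMk ((hu1 t htI).prodMk ((hu2 t htI).prodMk (hu3 t htI)))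
    exact (h.mono_of_mem_nhdsWithin hmem)
  have hf : ContinuousOn f (Icc 0 1) := fun t ht => by
    have h : HasDerivWithinAt f (u1 t, u2 t, u3 t, m * u t) (Icc 0 1) t :=
      (hu0 t ht).prodMk ((hu1 t ht).prodMk ((hu2 t ht).prodMk (hu3 t ht)))
    exact h.differentiableWithinAt.continuousWithinAt
  have hg' : ∀ t ∈ Ico (0:ℝ) 1, HasDerivWithinAt (fun _ : ℝ => (0 : E)) (v t 0) (Ici t) t := by
    intro t _
    simpa [v, map_zero] using (hasDerivWithinAt_const t (Ici t) (0 : E))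
  have heq : EqOn f (fun _ => (0:E)) (Icc 0 1) :=
    ODE_solution_unique hv hf hf' continuousOn_const hg'
      (by simp [f, h0, h1, h2, h3]; rfl)
  intro x hx
  have := heq hx
  simpa [f] using congrArg Prod.fst this


noncomputable def bC (ω x : ℝ) : ℝ := Real.cosh (ω*x) + Real.cos (ω*x)
noncomputable def bS (ω x : ℝ) : ℝ := Real.sinh (ω*x) + Real.sin (ω*x)
noncomputable def bE (ω x : ℝ) : ℝ := Real.cosh (ω*x) - Real.cos (ω*x)
noncomputable def bF (ω x : ℝ) : ℝ := Real.sinh (ω*x) - Real.sin (ω*x)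

lemma hasDerivAt_lin (ω x : ℝ) : HasDerivAt (fun y : ℝ => ω * y) ω x := by
  simpa using (hasDerivAt_id x).const_mul ω

lemma hasDerivAt_bC (ω x : ℝ) : HasDerivAt (bC ω) (ω * bF ω x) x := by
  have h := ((hasDerivAt_lin ω x).cosh).add ((hasDerivAt_lin ω x).cos)
  refine h.congr_deriv ?_
  unfold bF
  ring

lemma hasDerivAt_bS (ω x : ℝ) : HasDerivAt (bS ω) (ω * bC ω x) x := by
  have h := ((hasDerivAt_lin ω x).sinh).add ((hasDerivAt_lin ω x).sin)
  refine h.congr_deriv ?_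
  unfold bC; ring

lemma hasDerivAt_bE (ω x : ℝ) : HasDerivAt (bE ω) (ω * bS ω x) x := by
  have h := ((hasDerivAt_lin ω x).cosh).sub ((hasDerivAt_lin ω x).cos)
  refine h.congr_deriv ?_
  unfold bS; ring

lemma hasDerivAt_bF (ω x : ℝ) : HasDerivAt (bF ω) (ω * bE ω x) x := by
  have h := ((hasDerivAt_lin ω x).sinh).sub ((hasDerivAt_lin ω x).sin)
  refine h.congr_deriv ?_
  unfold bE; ring

lemma contDiff_bC (ω : ℝ) {n : WithTop ℕ∞} : ContDiff ℝ n (bC ω) :=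
  ((contDiff_const.mul contDiff_id).cosh).add ((contDiff_const.mul contDiff_id).cos)
lemma contDiff_bS (ω : ℝ) {n : WithTop ℕ∞} : ContDiff ℝ n (bS ω) :=
  ((contDiff_const.mul contDiff_id).sinh).add ((contDiff_const.mul contDiff_id).sin)
lemma contDiff_bE (ω : ℝ) {n : WithTop ℕ∞} : ContDiff ℝ n (bE ω) :=
  ((contDiff_const.mul contDiff_id).cosh).sub ((contDiff_const.mul contDiff_id).cos)
lemma contDiff_bF (ω : ℝ) {n : WithTop ℕ∞} : ContDiff ℝ n (bF ω) :=
  ((contDiff_const.mul contDiff_id).sinh).sub ((contDiff_const.mul contDiff_id).sin)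

@[simp] lemma bC_zero (ω : ℝ) : bC ω 0 = 2 := by simp [bC]; norm_num
@[simp] lemma bS_zero (ω : ℝ) : bS ω 0 = 0 := by simp [bS]
@[simp] lemma bE_zero (ω : ℝ) : bE ω 0 = 0 := by simp [bE]
@[simp] lemma bF_zero (ω : ℝ) : bF ω 0 = 0 := by simp [bF]

lemma bC_pos (ω : ℝ) : 0 < bC ω 1 := by
  unfold bC
  rcases eq_or_ne (ω*1) 0 with h | h
  · rw [h]; norm_num
  · have h1 : 1 < Real.cosh (ω*1) := Real.one_lt_cosh.mpr h
    nlinarith [Real.neg_one_le_cos (ω*1)]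


lemma bC_def (om x : ℝ) : bC om x = Real.cosh (om*x) + Real.cos (om*x) := rfl
lemma bS_def (om x : ℝ) : bS om x = Real.sinh (om*x) + Real.sin (om*x) := rfl
lemma bE_def (om x : ℝ) : bE om x = Real.cosh (om*x) - Real.cos (om*x) := rfl
lemma bF_def (om x : ℝ) : bF om x = Real.sinh (om*x) - Real.sin (om*x) := rfl

/-- Characteristic equation for the eigenvalues of the conservative beam system with
dynamical boundary control: for `μ > 0`, a nonzero solution of `u'''' = μ² u` on `[0,1]`
with `u(0) = u'(0) = 0`, `u''(1) = 0` and `u'''(1) = u(1)` exists iff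
`f(μ) = μ√μ + μ√μ cosh(√μ) cos(√μ) + sin(√μ) cosh(√μ) − cos(√μ) sinh(√μ) = 0`. -/
theorem beam_characteristic_equation (μ : ℝ) (hμ : 0 < μ) :
    (∃ u : ℝ → ℝ,
      ContDiffOn ℝ 4 u (Icc 0 1) ∧
      (∃ x ∈ Icc (0:ℝ) 1, u x ≠ 0) ∧
      (∀ x ∈ Icc (0:ℝ) 1, iteratedDerivWithin 4 u (Icc 0 1) x = μ ^ 2 * u x) ∧
      u 0 = 0 ∧
      derivWithin u (Icc 0 1) 0 = 0 ∧
      iteratedDerivWithin 2 u (Icc 0 1) 1 = 0 ∧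
      iteratedDerivWithin 3 u (Icc 0 1) 1 = u 1) ↔
    μ * Real.sqrt μ
      + μ * Real.sqrt μ * Real.cosh (Real.sqrt μ) * Real.cos (Real.sqrt μ)
      + Real.sin (Real.sqrt μ) * Real.cosh (Real.sqrt μ)
      - Real.cos (Real.sqrt μ) * Real.sinh (Real.sqrt μ) = 0 := by
  set ω : ℝ := Real.sqrt μ with hωdef
  have hω : 0 < ω := Real.sqrt_pos.mpr hμ
  have hω2 : ω ^ 2 = μ := Real.sq_sqrt hμ.le
  have hμω : μ ^ 2 = ω ^ 4 := by rw [← hω2]; ring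
  have hs : UniqueDiffOn ℝ (Icc (0:ℝ) 1) := uniqueDiffOn_Icc one_pos
  have h0mem : (0:ℝ) ∈ Icc (0:ℝ) 1 := by norm_num
  have h1mem : (1:ℝ) ∈ Icc (0:ℝ) 1 := by norm_num
  -- derivative chains of the explicit basis solutions
  have hvE0 : ∀ x, HasDerivAt (bE ω) (ω * bS ω x) x := hasDerivAt_bE ω
  have hvE1 : ∀ x, HasDerivAt (fun y => ω * bS ω y) (ω^2 * bC ω x) x := fun x => by
    have := (hasDerivAt_bS ω x).const_mul ω; refine this.congr_deriv ?_; ring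
  have hvE2 : ∀ x, HasDerivAt (fun y => ω^2 * bC ω y) (ω^3 * bF ω x) x := fun x => by
    have := (hasDerivAt_bC ω x).const_mul (ω^2); refine this.congr_deriv ?_; ring
  have hvE3 : ∀ x, HasDerivAt (fun y => ω^3 * bF ω y) (μ^2 * bE ω x) x := fun x => by
    have := (hasDerivAt_bF ω x).const_mul (ω^3); refine this.congr_deriv ?_; rw [hμω]; ring
  have hvF1 : ∀ x, HasDerivAt (fun y => ω * bE ω y) (ω^2 * bS ω x) x := fun x => by
    have := (hasDerivAt_bE ω x).const_mul ω; refine this.congr_deriv ?_; ring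
  have hvF2 : ∀ x, HasDerivAt (fun y => ω^2 * bS ω y) (ω^3 * bC ω x) x := fun x => by
    have := (hasDerivAt_bS ω x).const_mul (ω^2); refine this.congr_deriv ?_; ring
  have hvF3 : ∀ x, HasDerivAt (fun y => ω^3 * bC ω y) (μ^2 * bF ω x) x := fun x => by
    have := (hasDerivAt_bC ω x).const_mul (ω^3); refine this.congr_deriv ?_; rw [hμω]; ring
  have hvC1 : ∀ x, HasDerivAt (fun y => ω * bF ω y) (ω^2 * bE ω x) x := fun x => by
    have := (hasDerivAt_bF ω x).const_mul ω; refine this.congr_deriv ?_; ring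
  have hvC2 : ∀ x, HasDerivAt (fun y => ω^2 * bE ω y) (ω^3 * bS ω x) x := fun x => by
    have := (hasDerivAt_bE ω x).const_mul (ω^2); refine this.congr_deriv ?_; ring
  have hvC3 : ∀ x, HasDerivAt (fun y => ω^3 * bS ω y) (μ^2 * bC ω x) x := fun x => by
    have := (hasDerivAt_bS ω x).const_mul (ω^3); refine this.congr_deriv ?_; rw [hμω]; ring
  have hvS1 : ∀ x, HasDerivAt (fun y => ω * bC ω y) (ω^2 * bF ω x) x := fun x => by
    have := (hasDerivAt_bC ω x).const_mul ω; refine this.congr_deriv ?_; ring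
  have hvS2 : ∀ x, HasDerivAt (fun y => ω^2 * bF ω y) (ω^3 * bE ω x) x := fun x => by
    have := (hasDerivAt_bF ω x).const_mul (ω^2); refine this.congr_deriv ?_; ring
  have hvS3 : ∀ x, HasDerivAt (fun y => ω^3 * bE ω y) (μ^2 * bS ω x) x := fun x => by
    have := (hasDerivAt_bE ω x).const_mul (ω^3); refine this.congr_deriv ?_; rw [hμω]; ring
  constructor
  · rintro ⟨u, hu, ⟨x₀, hx₀, hx₀ne⟩, hODE, hu0, hu'0, hu''1, hu'''1⟩
    set s : Set ℝ := Icc (0:ℝ) 1 with hsdef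
    set u1 := iteratedDerivWithin 1 u s with hu1def
    set u2 := iteratedDerivWithin 2 u s with hu2def
    set u3 := iteratedDerivWithin 3 u s with hu3def
    have hder : ∀ k : ℕ, k < 4 → ∀ x ∈ s, HasDerivWithinAt (iteratedDerivWithin k u s)
        (iteratedDerivWithin (k+1) u s x) s x := by
      intro k hk x hx
      have hdiff : DifferentiableOn ℝ (iteratedDerivWithin k u s) s :=
        hu.differentiableOn_iteratedDerivWithin (by exact_mod_cast hk) hs
      have h := (hdiff x hx).hasDerivWithinAt
      rwa [← iteratedDerivWithin_succ] at h
    have hd0 : ∀ x ∈ s, HasDerivWithinAt u (u1 x) s x := fun x hx => by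
      have h := hder 0 (by norm_num) x hx
      rwa [iteratedDerivWithin_zero] at h
    have hd1 : ∀ x ∈ s, HasDerivWithinAt u1 (u2 x) s x := fun x hx => hder 1 (by norm_num) x hx
    have hd2 : ∀ x ∈ s, HasDerivWithinAt u2 (u3 x) s x := fun x hx => hder 2 (by norm_num) x hx
    have hd3 : ∀ x ∈ s, HasDerivWithinAt u3 (μ^2 * u x) s x := fun x hx => by
      have h := hder 3 (by norm_num) x hx
      rw [show (3+1) = 4 from rfl, hODE x hx] at h
      exact h
    have hu1_0 : u1 0 = 0 := by
      rw [hu1def, iteratedDerivWithin_one]; exact hu'0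
    have hu2_1 : u2 1 = 0 := hu''1
    have hu3_1 : u3 1 = u 1 := hu'''1
    have eqE := wronskian_rel hd0 hd1 hd2 hd3 hvE0 hvE1 hvE2 hvE3
    have eqF := wronskian_rel hd0 hd1 hd2 hd3 (hasDerivAt_bF ω) hvF1 hvF2 hvF3
    have eqC := wronskian_rel hd0 hd1 hd2 hd3 (hasDerivAt_bC ω) hvC1 hvC2 hvC3
    have eqS := wronskian_rel hd0 hd1 hd2 hd3 (hasDerivAt_bS ω) hvS1 hvS2 hvS3
    simp only [bC_zero, bS_zero, bE_zero, bF_zero, hu0, hu1_0, hu2_1, hu3_1,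
      mul_zero, zero_mul, sub_zero, add_zero, zero_add, zero_sub, sub_neg_eq_add] at eqE eqF eqC eqS
    -- eqE : u 1 * bE ω 1 - 0 + u1 1 * (ω^2 * bC ω 1) - u 1 * (ω^3 * bF ω 1) = 0 (roughly)
    by_cases hPQ : u 1 = 0 ∧ u1 1 = 0
    · -- degenerate case: all data vanish, contradiction
      obtain ⟨hP, hQ⟩ := hPQ
      have h3 : u3 0 = 0 := by
        rw [hP, hQ] at eqC
        nlinarith [eqC]
      have h2 : u2 0 = 0 := by
        rw [hP, hQ] at eqS
        nlinarith [eqS, hω]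
      have hzero := zero_of_zero_data hd0 hd1 hd2 hd3 hu0 hu1_0 h2 h3
      exact absurd (hzero x₀ hx₀) hx₀ne
    · -- nondegenerate: determinant vanishes
      set P := u 1
      set Q := u1 1
      set C₁ := bC ω 1 with hCd
      set S₁ := bS ω 1 with hSd
      set E₁ := bE ω 1 with hEd
      set F₁ := bF ω 1 with hFd
      have hi : P * (E₁ - ω^3 * F₁) + Q * (ω^2 * C₁) = 0 := by linear_combination eqE
      have hii : P * (F₁ - ω^3 * C₁) + Q * (ω^2 * S₁) = 0 := by linear_combination eqF
      have hdP : ((E₁ - ω^3*F₁) * (ω^2*S₁) - (ω^2*C₁) * (F₁ - ω^3*C₁)) * P = 0 := by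
        linear_combination (ω^2*S₁) * hi - (ω^2*C₁) * hii
      have hdQ : ((E₁ - ω^3*F₁) * (ω^2*S₁) - (ω^2*C₁) * (F₁ - ω^3*C₁)) * Q = 0 := by
        linear_combination (ω^3*C₁ - F₁) * hi + (E₁ - ω^3*F₁) * hii
      have hdet : (E₁ - ω^3*F₁) * (ω^2*S₁) - (ω^2*C₁) * (F₁ - ω^3*C₁) = 0 := by
        rcases not_and_or.mp hPQ with hP | hQ
        · exact (mul_eq_zero.mp hdP).resolve_right hP
        · exact (mul_eq_zero.mp hdQ).resolve_right hQ
      have hinner : (E₁ - ω^3*F₁) * S₁ - C₁ * (F₁ - ω^3*C₁) = 0 := by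
        have hω2ne : (ω:ℝ)^2 ≠ 0 := pow_ne_zero 2 hω.ne'
        have : ω^2 * ((E₁ - ω^3*F₁) * S₁ - C₁ * (F₁ - ω^3*C₁)) = 0 := by
          linear_combination hdet
        exact (mul_eq_zero.mp this).resolve_left hω2ne
      rw [← hω2]
      simp only [hCd, hSd, hEd, hFd, bC_def, bS_def, bE_def, bF_def, mul_one] at hinner
      have hid1 : Real.cosh ω ^ 2 - Real.sinh ω ^ 2 = 1 := Real.cosh_sq_sub_sinh_sq ω
      have hid2 : Real.sin ω ^ 2 + Real.cos ω ^ 2 = 1 := Real.sin_sq_add_cos_sq ω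
      linear_combination (1/2) * hinner - (ω^3/2) * hid1 - (ω^3/2) * hid2
  · intro hf
    rw [← hω2] at hf
    have hid1 := Real.cosh_sq_sub_sinh_sq ω
    have hid2 := Real.sin_sq_add_cos_sq ω
    have hdet : ω^3 * (bC ω 1^2 - bS ω 1 * bF ω 1)
        + (bS ω 1 * bE ω 1 - bC ω 1 * bF ω 1) = 0 := by
      rw [bC_def, bS_def, bE_def, bF_def, mul_one]
      linear_combination 2 * hf + ω^3 * hid1 + ω^3 * hid2
    set A := bS ω 1 with hAd
    set B := -bC ω 1 with hBd
    set v : ℝ → ℝ := fun x => A * bE ω x + B * bF ω x with hvd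
    have hg0 : ∀ x, HasDerivAt v (ω * (A * bS ω x + B * bE ω x)) x := fun x => by
      have := ((hasDerivAt_bE ω x).const_mul A).add ((hasDerivAt_bF ω x).const_mul B)
      refine this.congr_deriv ?_; ring
    have hg1 : ∀ x, HasDerivAt (fun y => ω * (A * bS ω y + B * bE ω y))
        (ω^2 * (A * bC ω x + B * bS ω x)) x := fun x => by
      have := (((hasDerivAt_bS ω x).const_mul A).add ((hasDerivAt_bE ω x).const_mul B)).const_mul ω
      refine this.congr_deriv ?_; ring
    have hg2 : ∀ x, HasDerivAt (fun y => ω^2 * (A * bC ω y + B * bS ω y))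
        (ω^3 * (A * bF ω x + B * bC ω x)) x := fun x => by
      have := (((hasDerivAt_bC ω x).const_mul A).add ((hasDerivAt_bS ω x).const_mul B)).const_mul (ω^2)
      refine this.congr_deriv ?_; ring
    have hg3 : ∀ x, HasDerivAt (fun y => ω^3 * (A * bF ω y + B * bC ω y))
        (ω^4 * (A * bE ω x + B * bF ω x)) x := fun x => by
      have := (((hasDerivAt_bF ω x).const_mul A).add ((hasDerivAt_bC ω x).const_mul B)).const_mul (ω^3)
      refine this.congr_deriv ?_; ring
    have hD1 : deriv v = fun x => ω * (A * bS ω x + B * bE ω x) :=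
      funext fun x => (hg0 x).deriv
    have hD2 : iteratedDeriv 2 v = fun x => ω^2 * (A * bC ω x + B * bS ω x) := by
      rw [show (2:ℕ) = 1+1 from rfl, iteratedDeriv_succ, iteratedDeriv_one, hD1]
      exact funext fun x => (hg1 x).deriv
    have hD3 : iteratedDeriv 3 v = fun x => ω^3 * (A * bF ω x + B * bC ω x) := by
      rw [show (3:ℕ) = 2+1 from rfl, iteratedDeriv_succ, hD2]
      exact funext fun x => (hg2 x).deriv
    have hD4 : iteratedDeriv 4 v = fun x => ω^4 * (A * bE ω x + B * bF ω x) := by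
      rw [show (4:ℕ) = 3+1 from rfl, iteratedDeriv_succ, hD3]
      exact funext fun x => (hg3 x).deriv
    have hsm : ContDiff ℝ (⊤:ℕ∞) v :=
      (contDiff_const.mul (contDiff_bE ω)).add (contDiff_const.mul (contDiff_bF ω))
    have key : ∀ (n : ℕ) ⦃x : ℝ⦄, x ∈ Icc (0:ℝ) 1 →
        iteratedDerivWithin n v (Icc 0 1) x = iteratedDeriv n v x := itDW_eq hsm hs
    have hsm4 : ContDiff ℝ 4 v :=
      (contDiff_const.mul (contDiff_bE ω)).add (contDiff_const.mul (contDiff_bF ω))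
    refine ⟨v, hsm4.contDiffOn, ?_, ?_, ?_, ?_, ?_, ?_⟩
    · -- not identically zero
      by_contra h
      push_neg at h
      have hEq : Set.EqOn v (fun _ : ℝ => (0:ℝ)) (Icc 0 1) := fun x hx => h x hx
      have h1 : iteratedDerivWithin 3 v (Icc 0 1) 0
          = iteratedDerivWithin 3 (fun _ : ℝ => (0:ℝ)) (Icc 0 1) 0 :=
        iteratedDerivWithin_congr hEq h0mem
      have h2 : iteratedDerivWithin 3 (fun _ : ℝ => (0:ℝ)) (Icc (0:ℝ) 1) 0 = 0 := by
        rw [itDW_eq contDiff_const hs 3 h0mem]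
        simp [iteratedDeriv_succ']
      have h3 : iteratedDerivWithin 3 v (Icc 0 1) 0 = 2 * ω^3 * B := by
        rw [key 3 h0mem, hD3]
        show ω^3 * (A * bF ω 0 + B * bC ω 0) = 2 * ω^3 * B
        rw [bF_zero, bC_zero]; ring
      rw [h1, h2] at h3
      have hBne : B ≠ 0 := by
        rw [hBd]
        exact neg_ne_zero.mpr (bC_pos ω).ne'
      have : (2:ℝ) * ω^3 * B ≠ 0 :=
        mul_ne_zero (mul_ne_zero two_ne_zero (pow_ne_zero 3 hω.ne')) hBne
      exact this h3.symm
    · -- the ODE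
      intro x hx
      rw [key 4 hx, hD4, hμω, hvd]
    · simp [hvd]
    · rw [(hg0 0).hasDerivWithinAt.derivWithin (hs.uniqueDiffWithinAt h0mem)]
      simp
    · rw [key 2 h1mem, hD2]
      simp only [hAd, hBd]
      ring
    · rw [key 3 h1mem, hD3, hvd]
      simp only [hAd, hBd]
      linear_combination -hdet
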